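/- Let κ ∈ (8/3,4), set θ(λ) = (π/κ)·√((4−κ)² − 8κλ), and define F : ℝ → ℝ near 0 by F(λ) = (1/(2cos(π(4−κ)/κ))) · (sin((κ−2)·θ(λ)) + 2cos(π(4−κ)/2)·sin((2−κ/2)·θ(λ)))/(sin((κ−1)·θ(λ)) + 2cos(π(4−κ)/2)·sin((1−κ/2)·θ(λ))). Then F has derivative at λ = 0 equal to (4π/(4−κ))·(2·sin²(4π/κ) − κ·sin²(κπ/2))/sin(8π/κ). -/

import Mathlib

theorem stmt_14 (κ : ℝ) (h1 : 8/3 < κ) (h2 : κ < 4) :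
    HasDerivAt (fun l : ℝ =>
        (1/(2*Real.cos (Real.pi*(4 - κ)/κ))) *
          ((Real.sin ((κ - 2) * (Real.pi/κ * Real.sqrt ((4 - κ)^2 - 8*κ*l))) +
              2*Real.cos (Real.pi*(4 - κ)/2) *
                Real.sin ((2 - κ/2) * (Real.pi/κ * Real.sqrt ((4 - κ)^2 - 8*κ*l)))) /
            (Real.sin ((κ - 1) * (Real.pi/κ * Real.sqrt ((4 - κ)^2 - 8*κ*l))) +
              2*Real.cos (Real.pi*(4 - κ)/2) *
                Real.sin ((1 - κ/2) * (Real.pi/κ * Real.sqrt ((4 - κ)^2 - 8*κ*l))))))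
      (4*Real.pi/(4 - κ) *
        (2*Real.sin (4*Real.pi/κ)^2 - κ*Real.sin (κ*Real.pi/2)^2) /
        Real.sin (8*Real.pi/κ)) 0 := by
  have hκ0 : (0:ℝ) < κ := by linarith
  have h4 : (0:ℝ) < 4 - κ := by linarith
  have hπ := Real.pi_pos
  set u := 4*Real.pi/κ with hu
  set v := κ*Real.pi/2 with hv
  have hu1 : Real.pi < u := by rw [hu, lt_div_iff₀ hκ0]; nlinarith
  have hu2 : u < 3*Real.pi/2 := by rw [hu, div_lt_iff₀ hκ0]; nlinarith
  have hsinu : Real.sin u < 0 := by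
    rw [← Real.sin_sub_two_pi]
    exact Real.sin_neg_of_neg_of_neg_pi_lt (by linarith) (by linarith)
  have hcosu : Real.cos u < 0 := by
    have h := Real.cos_sub_pi u
    have hp : 0 < Real.cos (u - Real.pi) :=
      Real.cos_pos_of_mem_Ioo ⟨by linarith, by linarith⟩
    linarith [h ▸ hp]
  have hsin2u : 0 < Real.sin (u + u) := by
    rw [← Real.sin_sub_two_pi]
    exact Real.sin_pos_of_pos_of_lt_pi (by linarith) (by linarith)
  have hs : Real.sqrt ((4 - κ)^2 - 8*κ*0) = 4 - κ := by
    rw [show (4 - κ)^2 - 8*κ*0 = (4 - κ)^2 by ring, Real.sqrt_sq h4.le]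
  -- trig atoms at θ0 = π/κ*(4-κ)
  have a1 : (κ - 2) * (Real.pi/κ * (4 - κ)) = ((-(u+(u+(v+v))) + 2*Real.pi) + 2*Real.pi) + 2*Real.pi := by
    rw [hu, hv]; field_simp; ring
  have a2 : (2 - κ/2) * (Real.pi/κ * (4 - κ)) = ((u+(u+v)) - 2*Real.pi) - 2*Real.pi := by
    rw [hu, hv]; field_simp; ring
  have a3 : (κ - 1) * (Real.pi/κ * (4 - κ)) = ((Real.pi - (u+(v+v))) + 2*Real.pi) + 2*Real.pi := by
    rw [hu, hv]; field_simp; ring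
  have a4 : (1 - κ/2) * (Real.pi/κ * (4 - κ)) = ((u+v) - Real.pi) - 2*Real.pi := by
    rw [hu, hv]; field_simp; ring
  have e1s : Real.sin ((κ - 2) * (Real.pi/κ * (4 - κ))) = -Real.sin (u+(u+(v+v))) := by
    rw [a1, Real.sin_add_two_pi, Real.sin_add_two_pi, Real.sin_add_two_pi, Real.sin_neg]
  have e1c : Real.cos ((κ - 2) * (Real.pi/κ * (4 - κ))) = Real.cos (u+(u+(v+v))) := by
    rw [a1, Real.cos_add_two_pi, Real.cos_add_two_pi, Real.cos_add_two_pi, Real.cos_neg]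
  have e2s : Real.sin ((2 - κ/2) * (Real.pi/κ * (4 - κ))) = Real.sin (u+(u+v)) := by
    rw [a2, Real.sin_sub_two_pi, Real.sin_sub_two_pi]
  have e2c : Real.cos ((2 - κ/2) * (Real.pi/κ * (4 - κ))) = Real.cos (u+(u+v)) := by
    rw [a2, Real.cos_sub_two_pi, Real.cos_sub_two_pi]
  have e3s : Real.sin ((κ - 1) * (Real.pi/κ * (4 - κ))) = Real.sin (u+(v+v)) := by
    rw [a3, Real.sin_add_two_pi, Real.sin_add_two_pi, Real.sin_pi_sub]
  have e3c : Real.cos ((κ - 1) * (Real.pi/κ * (4 - κ))) = -Real.cos (u+(v+v)) := by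
    rw [a3, Real.cos_add_two_pi, Real.cos_add_two_pi, Real.cos_pi_sub]
  have e4s : Real.sin ((1 - κ/2) * (Real.pi/κ * (4 - κ))) = -Real.sin (u+v) := by
    rw [a4, Real.sin_sub_two_pi, Real.sin_sub_pi]
  have e4c : Real.cos ((1 - κ/2) * (Real.pi/κ * (4 - κ))) = -Real.cos (u+v) := by
    rw [a4, Real.cos_sub_two_pi, Real.cos_sub_pi]
  have ec : Real.cos (Real.pi*(4 - κ)/κ) = -Real.cos u := by
    rw [show Real.pi*(4 - κ)/κ = u - Real.pi by rw [hu]; field_simp, Real.cos_sub_pi]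
  have ecv : Real.cos (Real.pi*(4 - κ)/2) = Real.cos v := by
    rw [show Real.pi*(4 - κ)/2 = 2*Real.pi - v by rw [hv]; ring, Real.cos_two_pi_sub]
  -- derivative machinery
  have hg : HasDerivAt (fun l : ℝ => (4 - κ)^2 - 8*κ*l) (-(8*κ)) 0 := by
    simpa using ((hasDerivAt_id (0:ℝ)).const_mul (8*κ)).const_sub ((4 - κ)^2)
  have hg0 : (4 - κ)^2 - 8*κ*(0:ℝ) ≠ 0 := by
    rw [show (4 - κ)^2 - 8*κ*(0:ℝ) = (4 - κ)^2 by ring]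
    exact pow_ne_zero _ h4.ne'
  have hsq := hg.sqrt hg0
  have hθ := hsq.const_mul (Real.pi/κ)
  have hsin1 := (hθ.const_mul (κ - 2)).sin
  have hsin2 := (hθ.const_mul (2 - κ/2)).sin
  have hsin3 := (hθ.const_mul (κ - 1)).sin
  have hsin4 := (hθ.const_mul (1 - κ/2)).sin
  have hN := hsin1.add (hsin2.const_mul (2*Real.cos (Real.pi*(4 - κ)/2)))
  have hD := hsin3.add (hsin4.const_mul (2*Real.cos (Real.pi*(4 - κ)/2)))
  have hDval' : Real.sin ((κ - 1) * (Real.pi/κ * (4 - κ))) +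
      2*Real.cos (Real.pi*(4 - κ)/2) *
        Real.sin ((1 - κ/2) * (Real.pi/κ * (4 - κ))) = -Real.sin u := by
    rw [e3s, e4s, ecv]
    simp only [Real.sin_add, Real.cos_add]
    linear_combination (-Real.sin u) * Real.sin_sq_add_cos_sq v
  have hDval : Real.sin ((κ - 1) * (Real.pi/κ * Real.sqrt ((4 - κ)^2 - 8*κ*0))) +
      2*Real.cos (Real.pi*(4 - κ)/2) *
        Real.sin ((1 - κ/2) * (Real.pi/κ * Real.sqrt ((4 - κ)^2 - 8*κ*0))) = -Real.sin u := by
    rw [hs]; exact hDval'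
  have hD0 : Real.sin ((κ - 1) * (Real.pi/κ * Real.sqrt ((4 - κ)^2 - 8*κ*0))) +
      2*Real.cos (Real.pi*(4 - κ)/2) *
        Real.sin ((1 - κ/2) * (Real.pi/κ * Real.sqrt ((4 - κ)^2 - 8*κ*0))) ≠ 0 := by
    rw [hDval]; exact neg_ne_zero.mpr hsinu.ne
  have H := (hN.div hD hD0).const_mul (1/(2*Real.cos (Real.pi*(4 - κ)/κ)))
  have e2u : Real.sin (8*Real.pi/κ) = 2*Real.sin u*Real.cos u := by
    rw [show 8*Real.pi/κ = 2*(4*Real.pi/κ) by ring, Real.sin_two_mul, ← hu]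
  convert H using 1
  · rfl
  · rfl
  · rfl
  simp only [Pi.add_apply]
  rw [hDval, hs, e1s, e1c, e2s, e2c, e3c, e4c, ec, ecv, e2u]
  simp only [Real.sin_add, Real.cos_add]
  set su := Real.sin u
  set cu := Real.cos u
  set sv := Real.sin v
  set cv := Real.cos v
  have hpu : su^2 + cu^2 = 1 := Real.sin_sq_add_cos_sq u
  have hpv : sv^2 + cv^2 = 1 := Real.sin_sq_add_cos_sq v
  have hsu : su ≠ 0 := hsinu.ne
  have hcu : cu ≠ 0 := hcosu.ne
  field_simp
  ring_nf
  linear_combination (8*su*κ*sv^2) * hpu + (16*su*κ*sv^2*cu^2 + 16*su^2*κ*sv*cu*cv - 16*su*cu^2*(sv^2+cv^2) - 16*su^3) * hpv
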